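/- Fix a ∈ ℝ and set λ₀(x) = 2(a−1)/(1+x) and s₀(x) = a(1−a)/(x(1+x)). Then for every n ≥ 1 and every real x with x + k ≠ 0 for all integers 0 ≤ k ≤ n+1, δ_n(x) = − a·(1−a)_n·(1−a)_{n+1} / ((x)_{n+1}·(x+1)_{n+1}). -/

import Mathlib

/-- Forward difference operator: `(Δ f)(x) = f(x+1) - f(x)`. -/
noncomputable def fd (f : ℝ → ℝ) : ℝ → ℝ := fun x => f (x + 1) - f x

/-- The DAIM sequences `(λ_n, s_n)` built from `(λ₀, s₀)`. -/
noncomputable def daim (l0 s0 : ℝ → ℝ) : ℕ → (ℝ → ℝ) × (ℝ → ℝ)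
  | 0 => (l0, s0)
  | n + 1 =>
      (fun x => fd (daim l0 s0 n).1 x + (daim l0 s0 n).1 (x + 1) * l0 x
          + (daim l0 s0 n).2 (x + 1),
       fun x => fd (daim l0 s0 n).2 x + (daim l0 s0 n).1 (x + 1) * s0 x)

/-- `δ_n(x) = λ_n(x) s_{n-1}(x) - λ_{n-1}(x) s_n(x)` (for `n ≥ 1`). -/
noncomputable def deltaDAIM (l0 s0 : ℝ → ℝ) (n : ℕ) (x : ℝ) : ℝ :=
  (daim l0 s0 n).1 x * (daim l0 s0 (n - 1)).2 x
    - (daim l0 s0 (n - 1)).1 x * (daim l0 s0 n).2 x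

/-- Rising factorial `(t)_m = t (t+1) ⋯ (t+m-1)`, with `(t)_0 = 1`. -/
noncomputable def risingFac (t : ℝ) (m : ℕ) : ℝ := ∏ j ∈ Finset.range m, (t + j)

lemma rf_succ (t : ℝ) (m : ℕ) : risingFac t (m+1) = risingFac t m * (t + m) := by
  simp [risingFac, Finset.prod_range_succ]

lemma rf_shift (t : ℝ) (m : ℕ) : risingFac t (m+1) = t * risingFac (t+1) m := by
  unfold risingFac
  rw [Finset.prod_range_succ']
  simp only [Nat.cast_zero, add_zero, Nat.cast_add, Nat.cast_one]
  rw [mul_comm]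
  congr 1
  exact Finset.prod_congr rfl (fun j _ => by ring)

lemma rf_ne (t : ℝ) (m : ℕ) (h : ∀ j : ℕ, j < m → t + j ≠ 0) : risingFac t m ≠ 0 :=
  Finset.prod_ne_zero_iff.2 (fun j hj => h j (Finset.mem_range.1 hj))

lemma daim_closed (a : ℝ) (l0 s0 : ℝ → ℝ)
    (hl0 : l0 = fun x => 2 * (a - 1) / (1 + x))
    (hs0 : s0 = fun x => a * (1 - a) / (x * (1 + x))) :
    ∀ n : ℕ, ∀ x : ℝ, (∀ k : ℕ, k ≤ n + 1 → x + k ≠ 0) →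
      (daim l0 s0 n).1 x
        = (-1)^(n+1) * ((n:ℝ)+2) * ((n:ℝ)+1-a) * risingFac (1-a) n / risingFac (x+1) (n+1)
      ∧ (daim l0 s0 n).2 x
        = (-1)^n * ((n:ℝ)+1) * a * ((n:ℝ)+1-a) * risingFac (1-a) n / risingFac x (n+2) := by
  intro n
  induction n with
  | zero =>
      intro x h
      have h0 : x ≠ 0 := by simpa using h 0 (by norm_num)
      have h1 : x + 1 ≠ 0 := by simpa using h 1 (by norm_num)
      have h1' : (1:ℝ) + x ≠ 0 := by intro hc; apply h1; linarith
      constructor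
      · simp only [daim, hl0, risingFac, Finset.prod_range_succ, Finset.prod_range_zero]
        push_cast
        field_simp
        ring_nf
        field_simp
        ring
      · simp only [daim, hs0, risingFac, Finset.prod_range_succ, Finset.prod_range_zero]
        push_cast
        field_simp
        ring_nf
        field_simp
  | succ n ih =>
      intro x h
      have h0 : x ≠ 0 := by simpa using h 0 (by norm_num)
      have h1 : x + 1 ≠ 0 := by simpa using h 1 (by norm_num)
      have h2 : x + ((n:ℝ) + 2) ≠ 0 := by
        have := h (n+2) le_rfl
        push_cast at this
        convert this using 2 <;> push_cast <;> ring
      have hA : risingFac (x+1+1) n ≠ 0 := by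
        apply rf_ne
        intro j hj
        have := h (j+2) (by omega)
        push_cast at this ⊢
        intro hc; apply this; linarith
      have hx : ∀ k : ℕ, k ≤ n + 1 → x + k ≠ 0 := fun k hk => h k (by omega)
      have hx1 : ∀ k : ℕ, k ≤ n + 1 → (x+1) + k ≠ 0 := by
        intro k hk
        have := h (k+1) (by omega)
        push_cast at this ⊢
        intro hc; apply this; linarith
      obtain ⟨Lx, Sx⟩ := ih x hx
      obtain ⟨Lx1, Sx1⟩ := ih (x+1) hx1
      -- rewrite rising factorials in terms of A = risingFac (x+1+1) n
      have e1 : risingFac (x+1) (n+1) = (x+1) * risingFac (x+1+1) n := rf_shift (x+1) n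
      have e2 : risingFac (x+1+1) (n+1) = risingFac (x+1+1) n * (x+1+1+n) := rf_succ _ n
      have e3 : risingFac (x+1) (n+1+1) = (x+1) * risingFac (x+1+1) n * (x+1+1+n) := by
        rw [rf_succ, e1]; push_cast; ring
      have e4 : risingFac x (n+2) = x * ((x+1) * risingFac (x+1+1) n) := by
        rw [rf_shift, e1]
      have e5 : risingFac (x+1) (n+2) = (x+1) * risingFac (x+1+1) n * (x+1+1+n) := e3
      have e6 : risingFac x (n+1+2) = x * ((x+1) * risingFac (x+1+1) n * (x+1+1+n)) := by
        rw [rf_shift x (n+2), e5]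
      have e7 : risingFac (1-a) (n+1) = risingFac (1-a) n * (1-a+n) := rf_succ _ n
      constructor
      · show fd (daim l0 s0 n).1 x + (daim l0 s0 n).1 (x + 1) * l0 x
            + (daim l0 s0 n).2 (x + 1) = _
        rw [fd]
        rw [Lx, Lx1, Sx1, hl0, e1, e2, e5, e7]
        simp only
        push_cast
        simp only [pow_succ]
        have hxn : x + 1 + 1 + (n:ℝ) ≠ 0 := by intro hc; apply h2; linarith
        have h1' : (1:ℝ) + x ≠ 0 := by intro hc; apply h1; linarith
        set A := risingFac (x+1+1) n with hAdef
        set C := risingFac (1-a) n with hCdef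
        set s := (-1:ℝ)^n with hsdef
        field_simp
        ring
      · show fd (daim l0 s0 n).2 x + (daim l0 s0 n).1 (x + 1) * s0 x = _
        rw [fd]
        rw [Sx, Sx1, Lx1, hs0, e4, e2, e5, e6, e7]
        simp only
        push_cast
        simp only [pow_succ]
        have hxn : x + 1 + 1 + (n:ℝ) ≠ 0 := by intro hc; apply h2; linarith
        have h1' : (1:ℝ) + x ≠ 0 := by intro hc; apply h1; linarith
        set A := risingFac (x+1+1) n with hAdef
        set C := risingFac (1-a) n with hCdef
        set s := (-1:ℝ)^n with hsdef
        field_simp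
        ring

theorem stmt_10 (a : ℝ) (l0 s0 : ℝ → ℝ)
    (hl0 : l0 = fun x => 2 * (a - 1) / (1 + x))
    (hs0 : s0 = fun x => a * (1 - a) / (x * (1 + x))) :
    ∀ n : ℕ, 1 ≤ n → ∀ x : ℝ, (∀ k : ℕ, k ≤ n + 1 → x + k ≠ 0) →
      deltaDAIM l0 s0 n x
        = -(a * risingFac (1 - a) n * risingFac (1 - a) (n + 1))
            / (risingFac x (n + 1) * risingFac (x + 1) (n + 1)) := by
  intro n hn x h
  obtain ⟨m, rfl⟩ : ∃ m, n = m + 1 := ⟨n - 1, by omega⟩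
  have h0 : x ≠ 0 := by simpa using h 0 (by norm_num)
  have h1 : x + 1 ≠ 0 := by simpa using h 1 (by norm_num)
  have h2 : x + 1 + 1 + (m:ℝ) ≠ 0 := by
    have := h (m+2) le_rfl
    push_cast at this
    intro hc; apply this; linarith
  have hA : risingFac (x+1+1) m ≠ 0 := by
    apply rf_ne
    intro j hj
    have := h (j+2) (by omega)
    push_cast at this ⊢
    intro hc; apply this; linarith
  have hxm : ∀ k : ℕ, k ≤ m + 1 → x + k ≠ 0 := fun k hk => h k (by omega)
  obtain ⟨Lm, Sm⟩ := daim_closed a l0 s0 hl0 hs0 m x hxm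
  obtain ⟨Lm1, Sm1⟩ := daim_closed a l0 s0 hl0 hs0 (m+1) x h
  have e1 : risingFac (x+1) (m+1) = (x+1) * risingFac (x+1+1) m := rf_shift (x+1) m
  have e3 : risingFac (x+1) (m+1+1) = (x+1) * risingFac (x+1+1) m * (x+1+1+m) := by
    rw [rf_succ, e1]; push_cast; ring
  have e4 : risingFac x (m+2) = x * ((x+1) * risingFac (x+1+1) m) := by
    rw [rf_shift, e1]
  have e6 : risingFac x (m+1+2) = x * ((x+1) * risingFac (x+1+1) m * (x+1+1+m)) := by
    rw [rf_shift x (m+2), show risingFac (x+1) (m+2) = (x+1) * risingFac (x+1+1) m * (x+1+1+m) from e3]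
  have e8 : risingFac x (m+1+1) = x * ((x+1) * risingFac (x+1+1) m) := by
    rw [rf_shift x (m+1), e1]
  have e7 : risingFac (1-a) (m+1) = risingFac (1-a) m * (1-a+m) := rf_succ _ m
  have e9 : risingFac (1-a) (m+1+1) = risingFac (1-a) m * (1-a+m) * (1-a+(m+1)) := by
    rw [rf_succ, e7]; push_cast; ring
  unfold deltaDAIM
  simp only [Nat.add_sub_cancel]
  rw [Lm, Sm, Lm1, Sm1, e1, e3, e4, e6, e7, e9]
  push_cast
  simp only [pow_succ]
  set A := risingFac (x+1+1) m with hAdef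
  set C := risingFac (1-a) m with hCdef
  rcases Nat.even_or_odd m with hm | hm
  · rw [hm.neg_one_pow]
    field_simp
    ring
  · rw [hm.neg_one_pow]
    field_simp
    ring
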